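/- Fix n ∈ ℕ and real structure constants f^{ab}_c with f^{ab}_c = −f^{ba}_c satisfying the Jacobi identity Σ_l (f^{kl}_i·f^{ja}_l + f^{jl}_i·f^{ak}_l + f^{al}_i·f^{kj}_l) = 0. Let γ : ℝⁿ → Matrix (Fin n) (Fin n) ℝ be continuously differentiable and satisfy the first master equation Σ_i (γ^j_i(A)·∂^i_A γ^k_l(A) − γ^k_i(A)·∂^i_A γ^j_l(A)) = Σ_i γ^i_l(A)·f^{jk}_i at every A ∈ ℝⁿ. Let T : ℝⁿ → ℝⁿ be a bijection which is twice continuously differentiable with continuously differentiable inverse, and define γ̃ : ℝⁿ → Matrix (Fin n) (Fin n) ℝ by γ̃^i_j(B) = Σ_k γ^i_k(T⁻¹(B))·(∂T_j/∂A_k)(T⁻¹(B)). Then γ̃ also satisfies the first master equation: Σ_i (γ̃^j_i(B)·∂^i_B γ̃^k_l(B) − γ̃^k_i(B)·∂^i_B γ̃^j_l(B)) = Σ_i γ̃^i_l(B)·f^{jk}_i at every B ∈ ℝⁿ. Moreover, if ρ : ℝⁿ → Matrix (Fin n) (Fin n) ℝ is continuously differentiable and satisfies the second master equation Σ_l (γ^j_l(A)·∂^l_A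 ρ^i_a(A) + ρ^l_a(A)·∂^i_A γ^j_l(A)) = 0 everywhere, then ρ̃ defined by ρ̃^i_a(B) = Σ_s (∂(T⁻¹)_s/∂B_i)(B)·ρ^s_a(T⁻¹(B)) satisfies the second master equation with γ replaced by γ̃. -/

import Mathlib

/-- Partial derivative with respect to the `i`-th coordinate of a real-valued function
of `A ∈ ℝⁿ`. -/
noncomputable def pd {n : ℕ} (i : Fin n) (g : (Fin n → ℝ) → ℝ) (A : Fin n → ℝ) : ℝ :=
  fderiv ℝ g A (Pi.single i 1)

section SWAux

variable {n : ℕ}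

lemma fderiv_apply_eq_sum_pd {g : (Fin n → ℝ) → ℝ} {x : Fin n → ℝ} (v : Fin n → ℝ) :
    fderiv ℝ g x v = ∑ s, v s * pd s g x := by
  have hv : v = ∑ s, v s • (Pi.single s 1 : Fin n → ℝ) := by
    funext j
    simp [Finset.sum_apply, Pi.single_apply]
  conv_lhs => rw [hv]
  rw [map_sum]
  simp [pd, smul_eq_mul]

lemma pd_coord (S : (Fin n → ℝ) → (Fin n → ℝ)) (hS : DifferentiableAt ℝ S B) (s i : Fin n) :
    pd i (fun C => S C s) B = fderiv ℝ S B (Pi.single i 1) s := by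
  have : (fun C => S C s) = (ContinuousLinearMap.proj (R := ℝ) (φ := fun _ : Fin n => ℝ) s) ∘ S := rfl
  rw [pd, this, fderiv_comp (x := B) (ContinuousLinearMap.differentiableAt _) hS,
    ContinuousLinearMap.fderiv]
  rfl

lemma pd_comp (g : (Fin n → ℝ) → ℝ) (S : (Fin n → ℝ) → (Fin n → ℝ)) {B : Fin n → ℝ}
    (hg : DifferentiableAt ℝ g (S B)) (hS : DifferentiableAt ℝ S B) (i : Fin n) :
    pd i (fun C => g (S C)) B = ∑ s, pd i (fun C => S C s) B * pd s g (S B) := by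
  have hcomp : (fun C => g (S C)) = g ∘ S := rfl
  rw [pd, hcomp, fderiv_comp (x := B) hg hS]
  simp only [ContinuousLinearMap.coe_comp', Function.comp_apply]
  rw [fderiv_apply_eq_sum_pd]
  exact Finset.sum_congr rfl fun s _ => by rw [pd_coord S hS]

lemma pd_sum {ι : Type*} (u : Finset ι) (F : ι → (Fin n → ℝ) → ℝ) {x : Fin n → ℝ}
    (h : ∀ k ∈ u, DifferentiableAt ℝ (F k) x) (i : Fin n) :
    pd i (fun y => ∑ k ∈ u, F k y) x = ∑ k ∈ u, pd i (F k) x := by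
  rw [pd, fderiv_fun_sum h]
  simp [pd]

lemma pd_mul (g h : (Fin n → ℝ) → ℝ) {x : Fin n → ℝ} (hg : DifferentiableAt ℝ g x)
    (hh : DifferentiableAt ℝ h x) (i : Fin n) :
    pd i (fun y => g y * h y) x = pd i g x * h x + g x * pd i h x := by
  rw [pd, fderiv_fun_mul hg hh]
  simp [pd, smul_eq_mul]
  ring

lemma pd_proj (j : Fin n) (x : Fin n → ℝ) (i : Fin n) :
    pd i (fun y => y j) x = if i = j then 1 else 0 := by
  have : pd i (fun y : Fin n → ℝ => id y j) x = fderiv ℝ (id : (Fin n → ℝ) → (Fin n → ℝ)) x (Pi.single i 1) j :=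
    pd_coord id differentiableAt_id j i
  simp only [id] at this
  rw [this, fderiv_id]
  simp [Pi.single_apply, eq_comm]

noncomputable def SWJ (T : (Fin n → ℝ) → (Fin n → ℝ)) (A : Fin n → ℝ) (j k : Fin n) : ℝ :=
  pd k (fun A' => T A' j) A

noncomputable def SWK (S : (Fin n → ℝ) → (Fin n → ℝ)) (B : Fin n → ℝ) (s i : Fin n) : ℝ :=
  pd i (fun C => S C s) B

noncomputable def SWH (T : (Fin n → ℝ) → (Fin n → ℝ)) (A : Fin n → ℝ) (l p m : Fin n) : ℝ :=
  pd p (fun A' => SWJ T A' l m) A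

lemma SWJ_contDiff {T : (Fin n → ℝ) → (Fin n → ℝ)} (hT : ContDiff ℝ 2 T) (j k : Fin n) :
    ContDiff ℝ 1 (fun A => SWJ T A j k) := by
  have hTj : ContDiff ℝ 2 (fun A => T A j) :=
    (ContinuousLinearMap.proj (R := ℝ) (φ := fun _ : Fin n => ℝ) j).contDiff.comp hT
  have h1 : ContDiff ℝ 1 (fderiv ℝ (fun A => T A j)) := hTj.fderiv_right (by norm_num)
  exact h1.clm_apply contDiff_const

lemma SWH_symm {T : (Fin n → ℝ) → (Fin n → ℝ)} (hT : ContDiff ℝ 2 T) (A : Fin n → ℝ)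
    (l p m : Fin n) : SWH T A l p m = SWH T A l m p := by
  have hTj : ContDiff ℝ 2 (fun A => T A l) :=
    (ContinuousLinearMap.proj (R := ℝ) (φ := fun _ : Fin n => ℝ) l).contDiff.comp hT
  have hsymm : IsSymmSndFDerivAt ℝ (fun A => T A l) A :=
    hTj.contDiffAt.isSymmSndFDerivAt (by simp)
  have hd : DifferentiableAt ℝ (fderiv ℝ (fun A => T A l)) A :=
    ((hTj.fderiv_right (m := 1) (by norm_num)).differentiable one_ne_zero) A
  have key : ∀ (q : Fin n) (w : Fin n → ℝ),
      pd q (fun A' => fderiv ℝ (fun A'' => T A'' l) A' w) A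
        = fderiv ℝ (fderiv ℝ (fun A'' => T A'' l)) A (Pi.single q 1) w := by
    intro q w
    rw [pd, fderiv_clm_apply hd (differentiableAt_const w)]
    simp
  have e1 : SWH T A l p m = fderiv ℝ (fderiv ℝ (fun A'' => T A'' l)) A (Pi.single p 1) (Pi.single m 1) := by
    rw [SWH]
    have : (fun A' => SWJ T A' l m)
        = fun A' => fderiv ℝ (fun A'' => T A'' l) A' (Pi.single m 1) := rfl
    rw [this, key p (Pi.single m 1)]
  have e2 : SWH T A l m p = fderiv ℝ (fderiv ℝ (fun A'' => T A'' l)) A (Pi.single m 1) (Pi.single p 1) := by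
    rw [SWH]
    have : (fun A' => SWJ T A' l p)
        = fun A' => fderiv ℝ (fun A'' => T A'' l) A' (Pi.single p 1) := rfl
    rw [this, key m (Pi.single p 1)]
  rw [e1, e2, hsymm (Pi.single p 1) (Pi.single m 1)]

section Inv
variable {T S : (Fin n → ℝ) → (Fin n → ℝ)}

lemma SW_inv1 (hT : ContDiff ℝ 2 T) (hS : ContDiff ℝ 1 S)
    (hSright : Function.RightInverse S T) (B : Fin n → ℝ) (i j : Fin n) :
    ∑ s, SWK S B s i * SWJ T (S B) j s = if i = j then 1 else 0 := by
  have hTj : DifferentiableAt ℝ (fun A => T A j) (S B) :=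
    (((ContinuousLinearMap.proj (R := ℝ) (φ := fun _ : Fin n => ℝ) j).contDiff.comp
      hT).differentiable (by norm_num)) (S B)
  have hSd : DifferentiableAt ℝ S B := (hS.differentiable one_ne_zero) B
  have h := pd_comp (fun A => T A j) S hTj hSd i
  have hfun : (fun C => T (S C) j) = fun C => C j := by
    funext C; rw [hSright C]
  rw [hfun, pd_proj] at h
  simp only [SWK, SWJ]
  exact h.symm

lemma SW_inv2 (hT : ContDiff ℝ 2 T) (hS : ContDiff ℝ 1 S)
    (hSleft : Function.LeftInverse S T) (hSright : Function.RightInverse S T)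
    (B : Fin n → ℝ) (s k : Fin n) :
    ∑ i, SWK S B s i * SWJ T (S B) i k = if s = k then 1 else 0 := by
  have hSs : DifferentiableAt ℝ (fun C => S C s) (T (S B)) := by
    have : DifferentiableAt ℝ S (T (S B)) := (hS.differentiable one_ne_zero) _
    exact (((ContinuousLinearMap.proj (R := ℝ) (φ := fun _ : Fin n => ℝ) s)).differentiableAt).comp _ this
  have hTd : DifferentiableAt ℝ T (S B) := (hT.differentiable (by norm_num)) (S B)
  have h := pd_comp (fun C => S C s) T hSs hTd k
  have hfun : (fun A => S (T A) s) = fun A => A s := by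
    funext A; rw [hSleft A]
  rw [hfun, pd_proj] at h
  -- h : (if k = s then 1 else 0) = ∑ i, pd k (fun A => T A i) (S B) * pd i (fun C => S C s) (T (S B))
  rw [hSright B] at h
  rw [show (if s = k then (1:ℝ) else 0) = (if k = s then (1:ℝ) else 0) by simp [eq_comm], h]
  exact Finset.sum_congr rfl fun i _ => by rw [SWK, SWJ]; ring

lemma contDiffAt_det_entries {N : (Fin n → ℝ) → Matrix (Fin n) (Fin n) ℝ} {x : Fin n → ℝ}
    (h : ∀ a b, ContDiffAt ℝ 1 (fun B => N B a b) x) :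
    ContDiffAt ℝ 1 (fun B => (N B).det) x := by
  have : (fun B => (N B).det)
      = fun B => ∑ σ : Equiv.Perm (Fin n),
          ((Equiv.Perm.sign σ : ℤ) : ℝ) * ∏ i, N B (σ i) i := by
    funext B
    rw [Matrix.det_apply]
    exact Finset.sum_congr rfl fun σ _ => by simp [Units.smul_def, zsmul_eq_mul]
  rw [this]
  refine ContDiffAt.sum fun σ _ => ?_
  exact contDiffAt_const.mul (contDiffAt_prod fun i _ => h (σ i) i)

lemma SWK_contDiffAt (hT : ContDiff ℝ 2 T) (hS : ContDiff ℝ 1 S)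
    (hSleft : Function.LeftInverse S T) (hSright : Function.RightInverse S T)
    (s i : Fin n) (B₀ : Fin n → ℝ) :
    ContDiffAt ℝ 1 (fun B => SWK S B s i) B₀ := by
  set M : (Fin n → ℝ) → Matrix (Fin n) (Fin n) ℝ :=
    fun B => Matrix.of fun j s => SWJ T (S B) j s with hM
  have hMentry : ∀ a b, ContDiffAt ℝ 1 (fun B => M B a b) B₀ := by
    intro a b
    exact ((SWJ_contDiff hT a b).comp hS).contDiffAt
  have h2 : ∀ B, (Matrix.of fun s i => SWK S B s i) * M B = 1 := by
    intro B
    ext a b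
    rw [Matrix.mul_apply, Matrix.one_apply]
    simpa [hM] using SW_inv2 hT hS hSleft hSright B a b
  have hinv : ∀ B, (M B)⁻¹ = Matrix.of fun s i => SWK S B s i := by
    intro B
    exact Matrix.inv_eq_left_inv (h2 B)
  have hdetne : ∀ B, (M B).det ≠ 0 := by
    intro B
    have : Invertible (M B) := invertibleOfLeftInverse _ _ (h2 B)
    exact (Matrix.isUnit_det_of_invertible (M B)).ne_zero
  have hfun : (fun B => SWK S B s i)
      = fun B => ((M B).det)⁻¹ * (M B).adjugate s i := by
    funext B
    rw [show SWK S B s i = (M B)⁻¹ s i by rw [hinv B]; rfl]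
    rw [Matrix.inv_def, Matrix.smul_apply, Ring.inverse_eq_inv', smul_eq_mul]
  rw [hfun]
  have hdet : ContDiffAt ℝ 1 (fun B => (M B).det) B₀ := contDiffAt_det_entries hMentry
  have hadj : ContDiffAt ℝ 1 (fun B => (M B).adjugate s i) B₀ := by
    have : (fun B => (M B).adjugate s i)
        = fun B => ((M B).updateRow i (Pi.single s 1)).det := by
      funext B; rw [Matrix.adjugate_apply]
    rw [this]
    refine contDiffAt_det_entries fun a b => ?_
    by_cases hai : a = i
    · simp only [hai, Matrix.updateRow_apply, if_pos rfl]
      exact contDiffAt_const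
    · simp only [Matrix.updateRow_apply, if_neg hai]
      exact hMentry a b
  exact (hdet.inv (hdetne B₀)).mul hadj

end Inv

lemma SW_contract {J' K' : Fin n → Fin n → ℝ}
    (hinv : ∀ s p, ∑ i, K' s i * J' i p = if s = p then 1 else 0) (a E : Fin n → ℝ) :
    ∑ i, (∑ p, a p * J' i p) * (∑ s, K' s i * E s) = ∑ p, a p * E p := by
  have step1 : ∀ i, (∑ p, a p * J' i p) * (∑ s, K' s i * E s)
      = ∑ p, ∑ s, (a p * E s) * (K' s i * J' i p) := by
    intro i
    rw [Finset.sum_mul_sum]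
    exact Finset.sum_congr rfl fun p _ => Finset.sum_congr rfl fun s _ => by ring
  calc ∑ i, (∑ p, a p * J' i p) * (∑ s, K' s i * E s)
      = ∑ i, ∑ p, ∑ s, (a p * E s) * (K' s i * J' i p) :=
        Finset.sum_congr rfl fun i _ => step1 i
    _ = ∑ p, ∑ i, ∑ s, (a p * E s) * (K' s i * J' i p) := Finset.sum_comm
    _ = ∑ p, ∑ s, ∑ i, (a p * E s) * (K' s i * J' i p) :=
        Finset.sum_congr rfl fun p _ => Finset.sum_comm
    _ = ∑ p, ∑ s, (a p * E s) * (if s = p then 1 else 0) := by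
        refine Finset.sum_congr rfl fun p _ => Finset.sum_congr rfl fun s _ => ?_
        rw [← Finset.mul_sum, hinv s p]
    _ = ∑ p, a p * E p := by
        refine Finset.sum_congr rfl fun p _ => ?_
        simp [Finset.sum_ite_eq]

lemma pd_gt_formula {T S : (Fin n → ℝ) → (Fin n → ℝ)} (hT : ContDiff ℝ 2 T)
    (hS : ContDiff ℝ 1 S)
    (θ : (Fin n → ℝ) → Fin n → Fin n → ℝ) (hθ : ∀ k m, ContDiff ℝ 1 (fun A => θ A k m))
    (k l : Fin n) (B : Fin n → ℝ) (i : Fin n) :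
    pd i (fun C => ∑ m, θ (S C) k m * SWJ T (S C) l m) B
      = ∑ s, SWK S B s i * (∑ m, (pd s (fun A => θ A k m) (S B) * SWJ T (S B) l m
          + θ (S B) k m * SWH T (S B) l s m)) := by
  have hθd : ∀ k m (X : Fin n → ℝ), DifferentiableAt ℝ (fun A => θ A k m) X :=
    fun k m X => ((hθ k m).differentiable one_ne_zero) X
  have hJd : ∀ l m (X : Fin n → ℝ), DifferentiableAt ℝ (fun A => SWJ T A l m) X :=
    fun l m X => ((SWJ_contDiff hT l m).differentiable one_ne_zero) X
  have hg : DifferentiableAt ℝ (fun A => ∑ m, θ A k m * SWJ T A l m) (S B) :=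
    DifferentiableAt.fun_sum fun m _ => (hθd k m _).mul (hJd l m _)
  have hSd : DifferentiableAt ℝ S B := (hS.differentiable one_ne_zero) B
  have h1 := pd_comp (fun A => ∑ m, θ A k m * SWJ T A l m) S hg hSd i
  rw [h1]
  refine Finset.sum_congr rfl fun s _ => ?_
  rw [show (pd i (fun C => S C s) B) = SWK S B s i from rfl]
  congr 1
  rw [pd_sum _ _ (fun m _ => (hθd k m _).fun_mul (hJd l m _))]
  refine Finset.sum_congr rfl fun m _ => ?_
  rw [pd_mul _ _ (hθd k m _) (hJd l m _)]
  rfl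

lemma master1_transport {T S : (Fin n → ℝ) → (Fin n → ℝ)} (hT : ContDiff ℝ 2 T)
    (hS : ContDiff ℝ 1 S)
    (hSleft : Function.LeftInverse S T) (hSright : Function.RightInverse S T)
    (f : Fin n → Fin n → Fin n → ℝ)
    (γ : (Fin n → ℝ) → Fin n → Fin n → ℝ)
    (hγC1 : ∀ i j, ContDiff ℝ 1 (fun A => γ A i j))
    (hmaster1 : ∀ A : Fin n → ℝ, ∀ j k l,
      ∑ i, (γ A j i * pd i (fun B => γ B k l) A - γ A k i * pd i (fun B => γ B j l) A)
        = ∑ i, γ A i l * f j k i)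
    (γt : (Fin n → ℝ) → Fin n → Fin n → ℝ)
    (hγt : ∀ B i j, γt B i j = ∑ k, γ (S B) i k * SWJ T (S B) j k)
    (B : Fin n → ℝ) (j k l : Fin n) :
    ∑ i, (γt B j i * pd i (fun C => γt C k l) B - γt B k i * pd i (fun C => γt C j l) B)
      = ∑ i, γt B i l * f j k i := by
  have hγtfun : ∀ k l, (fun C => γt C k l) = fun C => ∑ m, γ (S C) k m * SWJ T (S C) l m :=
    fun k l => funext fun C => hγt C k l
  -- main contraction
  have main : ∀ (j' k' : Fin n), ∑ i, γt B j' i * pd i (fun C => γt C k' l) B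
      = ∑ p, γ (S B) j' p * (∑ m, (pd p (fun A => γ A k' m) (S B) * SWJ T (S B) l m
          + γ (S B) k' m * SWH T (S B) l p m)) := by
    intro j' k'
    have hE : ∀ i, pd i (fun C => γt C k' l) B
        = ∑ s, SWK S B s i * (∑ m, (pd s (fun A => γ A k' m) (S B) * SWJ T (S B) l m
            + γ (S B) k' m * SWH T (S B) l s m)) := by
      intro i
      rw [hγtfun k' l]
      exact pd_gt_formula hT hS γ hγC1 k' l B i
    calc ∑ i, γt B j' i * pd i (fun C => γt C k' l) B
        = ∑ i, (∑ p, γ (S B) j' p * SWJ T (S B) i p)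
            * (∑ s, SWK S B s i * (∑ m, (pd s (fun A => γ A k' m) (S B) * SWJ T (S B) l m
                + γ (S B) k' m * SWH T (S B) l s m))) := by
          refine Finset.sum_congr rfl fun i _ => ?_
          rw [hγt B j' i, hE i]
      _ = _ := SW_contract (fun s p => SW_inv2 hT hS hSleft hSright B s p) _ _
  rw [Finset.sum_sub_distrib, main j k, main k j]
  -- expand products
  have expand : ∀ (j' k' : Fin n), ∑ p, γ (S B) j' p * (∑ m, (pd p (fun A => γ A k' m) (S B) * SWJ T (S B) l m
          + γ (S B) k' m * SWH T (S B) l p m))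
      = (∑ p, ∑ m, γ (S B) j' p * pd p (fun A => γ A k' m) (S B) * SWJ T (S B) l m)
        + (∑ p, ∑ m, γ (S B) j' p * γ (S B) k' m * SWH T (S B) l p m) := by
    intro j' k'
    rw [← Finset.sum_add_distrib]
    refine Finset.sum_congr rfl fun p _ => ?_
    rw [Finset.mul_sum, ← Finset.sum_add_distrib]
    exact Finset.sum_congr rfl fun m _ => by ring
  rw [expand j k, expand k j]
  -- Hessian terms cancel
  have hess : (∑ p, ∑ m, γ (S B) k p * γ (S B) j m * SWH T (S B) l p m)
      = ∑ p, ∑ m, γ (S B) j p * γ (S B) k m * SWH T (S B) l p m := by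
    rw [Finset.sum_comm]
    refine Finset.sum_congr rfl fun p _ => Finset.sum_congr rfl fun m _ => ?_
    rw [SWH_symm hT (S B) l p m]
    ring
  rw [hess]
  ring_nf
  -- now only the first-derivative terms remain
  have key : (∑ p, ∑ m, γ (S B) j p * pd p (fun A => γ A k m) (S B) * SWJ T (S B) l m)
      - (∑ p, ∑ m, γ (S B) k p * pd p (fun A => γ A j m) (S B) * SWJ T (S B) l m)
      = ∑ i, γt B i l * f j k i := by
    rw [← Finset.sum_sub_distrib]
    calc ∑ p, ((∑ m, γ (S B) j p * pd p (fun A => γ A k m) (S B) * SWJ T (S B) l m)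
          - ∑ m, γ (S B) k p * pd p (fun A => γ A j m) (S B) * SWJ T (S B) l m)
        = ∑ p, ∑ m, (γ (S B) j p * pd p (fun A => γ A k m) (S B)
            - γ (S B) k p * pd p (fun A => γ A j m) (S B)) * SWJ T (S B) l m := by
          refine Finset.sum_congr rfl fun p _ => ?_
          rw [← Finset.sum_sub_distrib]
          exact Finset.sum_congr rfl fun m _ => by ring
      _ = ∑ m, (∑ p, (γ (S B) j p * pd p (fun A => γ A k m) (S B)
            - γ (S B) k p * pd p (fun A => γ A j m) (S B))) * SWJ T (S B) l m := by
          rw [Finset.sum_comm]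
          exact Finset.sum_congr rfl fun m _ => by rw [Finset.sum_mul]
      _ = ∑ m, (∑ q, γ (S B) q m * f j k q) * SWJ T (S B) l m := by
          refine Finset.sum_congr rfl fun m _ => ?_
          rw [hmaster1 (S B) j k m]
      _ = ∑ m, ∑ q, γ (S B) q m * f j k q * SWJ T (S B) l m := by
          exact Finset.sum_congr rfl fun m _ => by rw [Finset.sum_mul]
      _ = ∑ q, ∑ m, γ (S B) q m * f j k q * SWJ T (S B) l m := Finset.sum_comm
      _ = ∑ q, (∑ m, γ (S B) q m * SWJ T (S B) l m) * f j k q := by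
          refine Finset.sum_congr rfl fun q _ => ?_
          rw [Finset.sum_mul]
          exact Finset.sum_congr rfl fun m _ => by ring
      _ = ∑ i, γt B i l * f j k i := by
          refine Finset.sum_congr rfl fun q _ => ?_
          rw [hγt B q l]
  linarith [key]

lemma pdK_formula {T S : (Fin n → ℝ) → (Fin n → ℝ)} (hT : ContDiff ℝ 2 T)
    (hS : ContDiff ℝ 1 S)
    (hSleft : Function.LeftInverse S T) (hSright : Function.RightInverse S T)
    (B : Fin n → ℝ) (i m l : Fin n) :
    pd l (fun C => SWK S C m i) B
      = -∑ q, SWK S B m q * (∑ s, SWK S B s i * (∑ p, SWK S B p l * SWH T (S B) q p s)) := by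
  have dK : ∀ (s i' : Fin n) (B' : Fin n → ℝ), DifferentiableAt ℝ (fun C => SWK S C s i') B' :=
    fun s i' B' => (SWK_contDiffAt hT hS hSleft hSright s i' B').differentiableAt one_ne_zero
  have dSd : DifferentiableAt ℝ S B := (hS.differentiable one_ne_zero) B
  have dJ : ∀ (j s : Fin n) (X : Fin n → ℝ), DifferentiableAt ℝ (fun A => SWJ T A j s) X :=
    fun j s X => ((SWJ_contDiff hT j s).differentiable one_ne_zero) X
  have dJS : ∀ j s : Fin n, DifferentiableAt ℝ (fun C => SWJ T (S C) j s) B :=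
    fun j s => (((SWJ_contDiff hT j s).comp hS).differentiable one_ne_zero) B
  have hpdJS : ∀ j s : Fin n, pd l (fun C => SWJ T (S C) j s) B
      = ∑ p, SWK S B p l * SWH T (S B) j p s := by
    intro j s
    have h := pd_comp (fun A => SWJ T A j s) S (dJ j s (S B)) dSd l
    rw [h]
    rfl
  have hconst : ∀ j, pd l (fun C => ∑ s, SWK S C s i * SWJ T (S C) j s) B = 0 := by
    intro j
    have hfun : (fun C => ∑ s, SWK S C s i * SWJ T (S C) j s)
        = fun _ => if i = j then (1:ℝ) else 0 := funext fun C => SW_inv1 hT hS hSright C i j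
    rw [hfun, pd, fderiv_const_apply]
    simp
  have hrel : ∀ j, ∑ s, pd l (fun C => SWK S C s i) B * SWJ T (S B) j s
      = -∑ s, SWK S B s i * (∑ p, SWK S B p l * SWH T (S B) j p s) := by
    intro j
    have h0 := hconst j
    rw [pd_sum Finset.univ (fun s => fun C => SWK S C s i * SWJ T (S C) j s)
      (fun s _ => (dK s i B).fun_mul (dJS j s)) l] at h0
    have h1 : ∀ s : Fin n, pd l (fun C => SWK S C s i * SWJ T (S C) j s) B
        = pd l (fun C => SWK S C s i) B * SWJ T (S B) j s
          + SWK S B s i * (∑ p, SWK S B p l * SWH T (S B) j p s) := by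
      intro s
      rw [pd_mul _ _ (dK s i B) (dJS j s), hpdJS j s]
    rw [Finset.sum_congr rfl (fun s _ => h1 s), Finset.sum_add_distrib] at h0
    linarith
  calc pd l (fun C => SWK S C m i) B
      = ∑ s, pd l (fun C => SWK S C s i) B * (if m = s then 1 else 0) := by
        simp [mul_ite, mul_one, mul_zero]
    _ = ∑ s, pd l (fun C => SWK S C s i) B * (∑ q, SWK S B m q * SWJ T (S B) q s) := by
        refine Finset.sum_congr rfl fun s _ => ?_
        rw [SW_inv2 hT hS hSleft hSright B m s]
    _ = ∑ q, SWK S B m q * (∑ s, pd l (fun C => SWK S C s i) B * SWJ T (S B) q s) := by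
        simp only [Finset.mul_sum]
        rw [Finset.sum_comm]
        exact Finset.sum_congr rfl fun q _ => Finset.sum_congr rfl fun s _ => by ring
    _ = ∑ q, SWK S B m q * (-∑ s, SWK S B s i * (∑ p, SWK S B p l * SWH T (S B) q p s)) := by
        exact Finset.sum_congr rfl fun q _ => by rw [hrel q]
    _ = -∑ q, SWK S B m q * (∑ s, SWK S B s i * (∑ p, SWK S B p l * SWH T (S B) q p s)) := by
        rw [← Finset.sum_neg_distrib]
        exact Finset.sum_congr rfl fun q _ => by ring

lemma sum4_cycle (G : Fin n → Fin n → Fin n → Fin n → ℝ) :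
    ∑ a, ∑ b, ∑ c, ∑ d, G a b c d = ∑ d, ∑ a, ∑ b, ∑ c, G a b c d := by
  calc ∑ a, ∑ b, ∑ c, ∑ d, G a b c d
      = ∑ a, ∑ b, ∑ d, ∑ c, G a b c d :=
        Finset.sum_congr rfl fun a _ => Finset.sum_congr rfl fun b _ => Finset.sum_comm
    _ = ∑ a, ∑ d, ∑ b, ∑ c, G a b c d :=
        Finset.sum_congr rfl fun a _ => Finset.sum_comm
    _ = ∑ d, ∑ a, ∑ b, ∑ c, G a b c d := Finset.sum_comm

lemma sum4_perm2 (G : Fin n → Fin n → Fin n → Fin n → ℝ) :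
    ∑ a, ∑ b, ∑ c, ∑ d, G a b c d = ∑ d, ∑ b, ∑ a, ∑ c, G a b c d := by
  rw [sum4_cycle]
  exact Finset.sum_congr rfl fun d _ => Finset.sum_comm

lemma master2_transport {T S : (Fin n → ℝ) → (Fin n → ℝ)} (hT : ContDiff ℝ 2 T)
    (hS : ContDiff ℝ 1 S)
    (hSleft : Function.LeftInverse S T) (hSright : Function.RightInverse S T)
    (γ : (Fin n → ℝ) → Fin n → Fin n → ℝ)
    (hγC1 : ∀ i j, ContDiff ℝ 1 (fun A => γ A i j))
    (γt : (Fin n → ℝ) → Fin n → Fin n → ℝ)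
    (hγt : ∀ B i j, γt B i j = ∑ k, γ (S B) i k * SWJ T (S B) j k)
    (ρ ρt : (Fin n → ℝ) → Fin n → Fin n → ℝ)
    (hρC1 : ∀ i j, ContDiff ℝ 1 (fun A => ρ A i j))
    (hmaster2 : ∀ A : Fin n → ℝ, ∀ i j a,
      ∑ l, (γ A j l * pd l (fun B => ρ B i a) A + ρ A l a * pd i (fun B => γ B j l) A) = 0)
    (hρt : ∀ B i a, ρt B i a = ∑ s, SWK S B s i * ρ (S B) s a)
    (B : Fin n → ℝ) (i j a : Fin n) :
    ∑ l, (γt B j l * pd l (fun C => ρt C i a) B + ρt B l a * pd i (fun C => γt C j l) B)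
      = 0 := by
  have dK : ∀ (s i' : Fin n) (B' : Fin n → ℝ), DifferentiableAt ℝ (fun C => SWK S C s i') B' :=
    fun s i' B' => (SWK_contDiffAt hT hS hSleft hSright s i' B').differentiableAt one_ne_zero
  have dSd : DifferentiableAt ℝ S B := (hS.differentiable one_ne_zero) B
  have dρ : ∀ (s a' : Fin n) (X : Fin n → ℝ), DifferentiableAt ℝ (fun A => ρ A s a') X :=
    fun s a' X => ((hρC1 s a').differentiable one_ne_zero) X
  have dρS : ∀ s a' : Fin n, DifferentiableAt ℝ (fun C => ρ (S C) s a') B :=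
    fun s a' => (((hρC1 s a').comp hS).differentiable one_ne_zero) B
  -- step A : derivative of ρt
  have hA : ∀ l, pd l (fun C => ρt C i a) B
      = ∑ p, SWK S B p l * (∑ m, SWK S B m i * pd p (fun A => ρ A m a) (S B))
        - ∑ m, (∑ q, SWK S B m q * (∑ s, SWK S B s i * (∑ p, SWK S B p l * SWH T (S B) q p s)))
            * ρ (S B) m a := by
    intro l
    have hfun : (fun C => ρt C i a) = fun C => ∑ m, SWK S C m i * ρ (S C) m a :=
      funext fun C => hρt C i a
    rw [hfun, pd_sum Finset.univ (fun m => fun C => SWK S C m i * ρ (S C) m a)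
      (fun m _ => (dK m i B).fun_mul (dρS m a)) l]
    have h1 : ∀ m : Fin n, pd l (fun C => SWK S C m i * ρ (S C) m a) B
        = pd l (fun C => SWK S C m i) B * ρ (S B) m a
          + SWK S B m i * (∑ p, SWK S B p l * pd p (fun A => ρ A m a) (S B)) := by
      intro m
      rw [pd_mul _ _ (dK m i B) (dρS m a)]
      congr 1
      have h := pd_comp (fun A => ρ A m a) S (dρ m a (S B)) dSd l
      rw [h]
      exact rfl
    rw [Finset.sum_congr rfl fun m _ => h1 m, Finset.sum_add_distrib]
    have e1 : ∑ m, SWK S B m i * (∑ p, SWK S B p l * pd p (fun A => ρ A m a) (S B))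
        = ∑ p, SWK S B p l * (∑ m, SWK S B m i * pd p (fun A => ρ A m a) (S B)) := by
      simp only [Finset.mul_sum]
      rw [Finset.sum_comm]
      exact Finset.sum_congr rfl fun p _ => Finset.sum_congr rfl fun m _ => by ring
    have e2 : ∑ m, pd l (fun C => SWK S C m i) B * ρ (S B) m a
        = -∑ m, (∑ q, SWK S B m q * (∑ s, SWK S B s i * (∑ p, SWK S B p l * SWH T (S B) q p s)))
            * ρ (S B) m a := by
      rw [← Finset.sum_neg_distrib]
      refine Finset.sum_congr rfl fun m _ => ?_
      rw [pdK_formula hT hS hSleft hSright B i m l]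
      ring
    rw [e1, e2]
    ring
  -- step B : derivative of γt
  have hB : ∀ l, pd i (fun C => γt C j l) B
      = ∑ s, SWK S B s i * (∑ m, (pd s (fun A => γ A j m) (S B) * SWJ T (S B) l m
          + γ (S B) j m * SWH T (S B) l s m)) := by
    intro l
    have hγtfun : (fun C => γt C j l) = fun C => ∑ m, γ (S C) j m * SWJ T (S C) l m :=
      funext fun C => hγt C j l
    rw [hγtfun]
    exact pd_gt_formula hT hS γ hγC1 j l B i
  -- contraction c1
  have c1 : ∑ l, γt B j l * (∑ p, SWK S B p l * (∑ m, SWK S B m i * pd p (fun A => ρ A m a) (S B)))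
      = ∑ p, γ (S B) j p * (∑ m, SWK S B m i * pd p (fun A => ρ A m a) (S B)) := by
    have := SW_contract (J' := fun l k => SWJ T (S B) l k) (K' := SWK S B)
      (fun s p => SW_inv2 hT hS hSleft hSright B s p) (fun k => γ (S B) j k)
      (fun p => ∑ m, SWK S B m i * pd p (fun A => ρ A m a) (S B))
    rw [← this]
    exact Finset.sum_congr rfl fun l _ => by rw [hγt B j l]
  -- contraction c2
  have c2 : ∑ l, γt B j l * (∑ m, (∑ q, SWK S B m q * (∑ s, SWK S B s i
          * (∑ p, SWK S B p l * SWH T (S B) q p s))) * ρ (S B) m a)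
      = ∑ p, γ (S B) j p * (∑ m, ρ (S B) m a * (∑ q, SWK S B m q
          * (∑ s, SWK S B s i * SWH T (S B) q p s))) := by
    have hre : ∀ l, (∑ m, (∑ q, SWK S B m q * (∑ s, SWK S B s i
          * (∑ p, SWK S B p l * SWH T (S B) q p s))) * ρ (S B) m a)
        = ∑ p, SWK S B p l * (∑ m, ρ (S B) m a * (∑ q, SWK S B m q
            * (∑ s, SWK S B s i * SWH T (S B) q p s))) := by
      intro l
      simp only [Finset.mul_sum, Finset.sum_mul]
      rw [sum4_cycle]
      exact Finset.sum_congr rfl fun p _ => Finset.sum_congr rfl fun m _ =>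
        Finset.sum_congr rfl fun q _ => Finset.sum_congr rfl fun s _ => by ring
    have := SW_contract (J' := fun l k => SWJ T (S B) l k) (K' := SWK S B)
      (fun s p => SW_inv2 hT hS hSleft hSright B s p) (fun k => γ (S B) j k)
      (fun p => ∑ m, ρ (S B) m a * (∑ q, SWK S B m q * (∑ s, SWK S B s i * SWH T (S B) q p s)))
    rw [← this]
    refine Finset.sum_congr rfl fun l _ => ?_
    rw [hγt B j l, hre l]
  -- contraction c3
  have c3 : ∑ l, ρt B l a * (∑ s, SWK S B s i * (∑ m, pd s (fun A => γ A j m) (S B) * SWJ T (S B) l m))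
      = ∑ m, (∑ s, SWK S B s i * pd s (fun A => γ A j m) (S B)) * ρ (S B) m a := by
    have hre : ∀ l, (∑ s, SWK S B s i * (∑ m, pd s (fun A => γ A j m) (S B) * SWJ T (S B) l m))
        = ∑ m, ((∑ s, SWK S B s i * pd s (fun A => γ A j m) (S B)) * SWJ T (S B) l m) := by
      intro l
      simp only [Finset.mul_sum, Finset.sum_mul]
      rw [Finset.sum_comm]
      exact Finset.sum_congr rfl fun m _ => Finset.sum_congr rfl fun s _ => by ring
    have := SW_contract (J' := fun l k => SWJ T (S B) l k) (K' := SWK S B)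
      (fun s p => SW_inv2 hT hS hSleft hSright B s p)
      (fun m => ∑ s, SWK S B s i * pd s (fun A => γ A j m) (S B))
      (fun q => ρ (S B) q a)
    rw [← this]
    refine Finset.sum_congr rfl fun l _ => ?_
    rw [hρt B l a, hre l]
    ring
  -- cancellation of Hessian terms : c4-form equals c2's RHS
  have cancel : ∑ l, ρt B l a * (∑ s, SWK S B s i * (∑ m, γ (S B) j m * SWH T (S B) l s m))
      = ∑ p, γ (S B) j p * (∑ m, ρ (S B) m a * (∑ q, SWK S B m q
          * (∑ s, SWK S B s i * SWH T (S B) q p s))) := by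
    have hrt : ∀ l, ρt B l a = ∑ q, SWK S B q l * ρ (S B) q a := fun l => hρt B l a
    calc ∑ l, ρt B l a * (∑ s, SWK S B s i * (∑ m, γ (S B) j m * SWH T (S B) l s m))
        = ∑ l, ∑ q, ∑ s, ∑ m, (SWK S B q l * ρ (S B) q a)
            * (SWK S B s i * (γ (S B) j m * SWH T (S B) l s m)) := by
          refine Finset.sum_congr rfl fun l _ => ?_
          rw [hrt l, Finset.sum_mul]
          refine Finset.sum_congr rfl fun q _ => ?_
          rw [Finset.mul_sum]
          refine Finset.sum_congr rfl fun s _ => ?_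
          rw [Finset.mul_sum, Finset.mul_sum]
      _ = ∑ m, ∑ q, ∑ l, ∑ s, (SWK S B q l * ρ (S B) q a)
            * (SWK S B s i * (γ (S B) j m * SWH T (S B) l s m)) :=
          sum4_perm2 _
      _ = ∑ p, γ (S B) j p * (∑ m, ρ (S B) m a * (∑ q, SWK S B m q
            * (∑ s, SWK S B s i * SWH T (S B) q p s))) := by
          simp only [Finset.mul_sum]
          refine Finset.sum_congr rfl fun p _ => Finset.sum_congr rfl fun m _ =>
            Finset.sum_congr rfl fun q _ => Finset.sum_congr rfl fun s _ => ?_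
          rw [SWH_symm hT (S B) q p s]
          ring
  -- the master-2 combination
  have m2 : ∑ p, γ (S B) j p * (∑ m, SWK S B m i * pd p (fun A => ρ A m a) (S B))
      + ∑ m, (∑ s, SWK S B s i * pd s (fun A => γ A j m) (S B)) * ρ (S B) m a = 0 := by
    have e1 : ∑ p, γ (S B) j p * (∑ m, SWK S B m i * pd p (fun A => ρ A m a) (S B))
        = ∑ s, SWK S B s i * (∑ p, γ (S B) j p * pd p (fun A => ρ A s a) (S B)) := by
      simp only [Finset.mul_sum]
      rw [Finset.sum_comm]
      exact Finset.sum_congr rfl fun s _ => Finset.sum_congr rfl fun p _ => by ring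
    have e2 : ∑ m, (∑ s, SWK S B s i * pd s (fun A => γ A j m) (S B)) * ρ (S B) m a
        = ∑ s, SWK S B s i * (∑ m, ρ (S B) m a * pd s (fun A => γ A j m) (S B)) := by
      simp only [Finset.sum_mul, Finset.mul_sum]
      rw [Finset.sum_comm]
      exact Finset.sum_congr rfl fun s _ => Finset.sum_congr rfl fun m _ => by ring
    rw [e1, e2, ← Finset.sum_add_distrib]
    have : ∀ s : Fin n, SWK S B s i * (∑ p, γ (S B) j p * pd p (fun A => ρ A s a) (S B))
        + SWK S B s i * (∑ m, ρ (S B) m a * pd s (fun A => γ A j m) (S B))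
        = SWK S B s i * (∑ l, (γ (S B) j l * pd l (fun A => ρ A s a) (S B)
            + ρ (S B) l a * pd s (fun A => γ A j l) (S B))) := by
      intro s
      rw [Finset.sum_add_distrib, mul_add]
    rw [Finset.sum_congr rfl fun s _ => this s]
    rw [Finset.sum_congr rfl fun s _ => by rw [hmaster2 (S B) s j a, mul_zero]]
    exact Finset.sum_const_zero
  -- assemble
  have split : ∑ l, (γt B j l * pd l (fun C => ρt C i a) B + ρt B l a * pd i (fun C => γt C j l) B)
      = (∑ l, γt B j l * (∑ p, SWK S B p l * (∑ m, SWK S B m i * pd p (fun A => ρ A m a) (S B)))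
          - ∑ l, γt B j l * (∑ m, (∑ q, SWK S B m q * (∑ s, SWK S B s i
              * (∑ p, SWK S B p l * SWH T (S B) q p s))) * ρ (S B) m a))
        + (∑ l, ρt B l a * (∑ s, SWK S B s i * (∑ m, pd s (fun A => γ A j m) (S B) * SWJ T (S B) l m))
          + ∑ l, ρt B l a * (∑ s, SWK S B s i * (∑ m, γ (S B) j m * SWH T (S B) l s m))) := by
    rw [← Finset.sum_sub_distrib, ← Finset.sum_add_distrib, ← Finset.sum_add_distrib]
    refine Finset.sum_congr rfl fun l _ => ?_
    rw [hA l, hB l]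
    have hsplitB : ∑ s, SWK S B s i * (∑ m, (pd s (fun A => γ A j m) (S B) * SWJ T (S B) l m
          + γ (S B) j m * SWH T (S B) l s m))
        = (∑ s, SWK S B s i * (∑ m, pd s (fun A => γ A j m) (S B) * SWJ T (S B) l m))
          + ∑ s, SWK S B s i * (∑ m, γ (S B) j m * SWH T (S B) l s m) := by
      rw [← Finset.sum_add_distrib]
      refine Finset.sum_congr rfl fun s _ => ?_
      rw [Finset.sum_add_distrib, mul_add]
    rw [hsplitB]
    ring
  rw [split, c1, c2, c3, cancel]
  linarith [m2]

end SWAux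

/-- Seiberg–Witten maps preserve the master equations. If `γ` satisfies the
first master equation for antisymmetric structure constants `f` obeying the Jacobi
identity, `T : ℝⁿ → ℝⁿ` is a `C²` bijection with `C¹` inverse `S`, and
`γ̃^i_j(B) = Σ_k γ^i_k(S B)(∂T_j/∂A_k)(S B)`, then `γ̃` satisfies the first master
equation; moreover, if a `C¹` map `ρ` satisfies the second master equation with `γ`,
then `ρ̃^i_a(B) = Σ_s (∂S_s/∂B_i)(B) ρ^s_a(S B)` satisfies it with `γ̃`. -/
theorem seiberg_witten_transports_master_equations (n : ℕ)
    (f : Fin n → Fin n → Fin n → ℝ)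
    (hanti : ∀ a b c, f a b c = - f b a c)
    (hjac : ∀ i j k a, ∑ l, (f k l i * f j a l + f j l i * f a k l + f a l i * f k j l) = 0)
    (γ : (Fin n → ℝ) → Fin n → Fin n → ℝ)
    (hγC1 : ∀ i j, ContDiff ℝ 1 (fun A => γ A i j))
    (hmaster1 : ∀ A : Fin n → ℝ, ∀ j k l,
      ∑ i, (γ A j i * pd i (fun B => γ B k l) A - γ A k i * pd i (fun B => γ B j l) A)
        = ∑ i, γ A i l * f j k i)
    (T S : (Fin n → ℝ) → (Fin n → ℝ))
    (hTbij : Function.Bijective T)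
    (hTC2 : ContDiff ℝ 2 T)
    (hSleft : Function.LeftInverse S T) (hSright : Function.RightInverse S T)
    (hSC1 : ContDiff ℝ 1 S)
    (γt : (Fin n → ℝ) → Fin n → Fin n → ℝ)
    (hγt : ∀ B i j, γt B i j = ∑ k, γ (S B) i k * pd k (fun A => T A j) (S B)) :
    (∀ B : Fin n → ℝ, ∀ j k l,
      ∑ i, (γt B j i * pd i (fun C => γt C k l) B - γt B k i * pd i (fun C => γt C j l) B)
        = ∑ i, γt B i l * f j k i) ∧
    (∀ ρ ρt : (Fin n → ℝ) → Fin n → Fin n → ℝ,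
      (∀ i j, ContDiff ℝ 1 (fun A => ρ A i j)) →
      (∀ A : Fin n → ℝ, ∀ i j a,
        ∑ l, (γ A j l * pd l (fun B => ρ B i a) A + ρ A l a * pd i (fun B => γ B j l) A) = 0) →
      (∀ B i a, ρt B i a = ∑ s, pd i (fun C => S C s) B * ρ (S B) s a) →
      (∀ B : Fin n → ℝ, ∀ i j a,
        ∑ l, (γt B j l * pd l (fun C => ρt C i a) B + ρt B l a * pd i (fun C => γt C j l) B)
          = 0)) := by
  constructor
  · intro B j k l
    exact master1_transport hTC2 hSC1 hSleft hSright f γ hγC1 hmaster1 γt hγt B j k l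
  · intro ρ ρt hρC1 hmaster2 hρt B i j a
    exact master2_transport hTC2 hSC1 hSleft hSright γ hγC1 γt hγt ρ ρt hρC1 hmaster2 hρt B i j a
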